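/- Let μ be a nonzero finite Borel measure on ℝ with μ((−∞,0]) = 0 and let π : ℝ → [0,∞) be measurable with π = 0 on (−∞,0] and π(z) > 0 for all z > 0. Suppose there exist C' > 0 and x₀ > 0 such that ∫_0^z π(w) dw ≤ C' z π(z) for all z ∈ (0,x₀]. Then for every x ∈ (0,x₀], ∫_0^x π(z) / ( ∫_0^z μ((z−w,∞)) π(w) dw ) dz = +∞. -/

import Mathlib

open MeasureTheory Set Filter ENNReal

/-- divergence of the drift-time integral `∫_0^x π/(μ̄ₛ*π)` near the origin
(equation (eq_subor) of the paper); the process cannot drift onto `0` in finite time. -/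
theorem drift_time_integral_diverges
    (μ : Measure ℝ) [IsFiniteMeasure μ] (hμne : μ ≠ 0) (hμ : μ (Iic 0) = 0)
    (π : ℝ → ℝ) (hπ_meas : Measurable π) (hπ_nonneg : ∀ x, 0 ≤ π x)
    (hπ_zero : ∀ x ≤ 0, π x = 0) (hπ_pos : ∀ z > (0 : ℝ), 0 < π z)
    (C' x₀ : ℝ) (hC' : 0 < C') (hx₀ : 0 < x₀)
    (hbound : ∀ z ∈ Ioc 0 x₀,
      ∫⁻ w in Ioo 0 z, ENNReal.ofReal (π w) ≤ ENNReal.ofReal (C' * z * π z)) :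
    ∀ x ∈ Ioc 0 x₀,
      ∫⁻ z in Ioo 0 x,
        ENNReal.ofReal (π z / ∫ w in Ioo 0 z, (μ (Ioi (z - w))).toReal * π w) = ⊤ := by
  intro x hx
  -- notation
  set M : ℝ := (μ Set.univ).toReal with hMdef
  have hMpos : 0 < M := by
    refine ENNReal.toReal_pos ?_ (measure_ne_top μ _)
    simpa [Measure.measure_univ_eq_zero] using hμne
  set g : ℝ → ℝ := fun t => (μ (Ioi t)).toReal with hgdef
  have hganti : Antitone g := fun s t hst =>
    ENNReal.toReal_mono (measure_ne_top μ _) (measure_mono (Ioi_subset_Ioi hst))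
  have hg_meas : Measurable g := hganti.measurable
  have hgM : ∀ t, g t ≤ M :=
    fun t => ENNReal.toReal_mono (measure_ne_top μ _) (measure_mono (subset_univ _))
  -- there is ε > 0 with μ (Ioi ε) > 0
  obtain ⟨ε, hεpos, hεμ⟩ : ∃ ε : ℝ, 0 < ε ∧ 0 < μ (Ioi ε) := by
    by_contra h
    push_neg at h
    have h0 : ∀ ε : ℝ, 0 < ε → μ (Ioi ε) = 0 := fun ε hε => le_antisymm (h ε hε) bot_le
    have hsub : Ioi (0:ℝ) ⊆ ⋃ n : ℕ, Ioi ((n:ℝ)+1)⁻¹ := by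
      intro t ht
      obtain ⟨n, hn⟩ := exists_nat_one_div_lt (mem_Ioi.mp ht)
      exact mem_iUnion.2 ⟨n, by simpa [one_div] using hn⟩
    have : μ (Ioi (0:ℝ)) = 0 := by
      refine le_antisymm ((measure_mono hsub).trans ?_) bot_le
      rw [measure_iUnion_null fun n => h0 _ (by positivity)]
    apply hμne
    have huniv : μ Set.univ = 0 := by
      have : (Set.univ : Set ℝ) = Iic 0 ∪ Ioi 0 := by
        ext t; simp [le_or_gt]
      rw [this]
      exact le_antisymm ((measure_union_le _ _).trans (by simp [hμ, ‹μ (Ioi (0:ℝ)) = 0›])) bot_le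
    exact Measure.measure_univ_eq_zero.mp huniv
  -- the denominator, as a function of z
  set D : ℝ → ℝ := fun z => ∫ w in Ioo 0 z, g (z - w) * π w with hDdef
  -- facts for z ∈ Ioc 0 x₀
  have key : ∀ z ∈ Ioc 0 x₀, (M * C')⁻¹ * z⁻¹ ≤ π z / D z := by
    intro z hz
    have hz0 : 0 < z := hz.1
    have hπz : 0 < π z := hπ_pos z hz0
    -- π is integrable on Ioo 0 z
    have hπint : IntegrableOn π (Ioo 0 z) := by
      rw [IntegrableOn, ← lintegral_ofReal_ne_top_iff_integrable
        (hπ_meas.aestronglyMeasurable.restrict) (ae_of_all _ hπ_nonneg)]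
      exact ((hbound z hz).trans_lt ENNReal.ofReal_lt_top).ne
    -- the integrand of D z is measurable and integrable
    have hfz_meas : Measurable fun w => g (z - w) * π w :=
      (hg_meas.comp (measurable_const.sub measurable_id)).mul hπ_meas
    have hfz_int : IntegrableOn (fun w => g (z - w) * π w) (Ioo 0 z) := by
      refine Integrable.mono' (hπint.const_mul M) hfz_meas.aestronglyMeasurable.restrict
        (ae_of_all _ fun w => ?_)
      rw [Real.norm_eq_abs, abs_of_nonneg (mul_nonneg (ENNReal.toReal_nonneg) (hπ_nonneg w))]
      exact mul_le_mul_of_nonneg_right (hgM _) (hπ_nonneg w)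
    -- ∫ π over Ioo 0 z ≤ C' z π z
    have hπle : ∫ w in Ioo 0 z, π w ≤ C' * z * π z := by
      rw [MeasureTheory.integral_eq_lintegral_of_nonneg_ae (ae_of_all _ hπ_nonneg)
        hπ_meas.aestronglyMeasurable.restrict]
      calc (∫⁻ w in Ioo 0 z, ENNReal.ofReal (π w)).toReal
          ≤ (ENNReal.ofReal (C' * z * π z)).toReal :=
            ENNReal.toReal_mono ENNReal.ofReal_ne_top (hbound z hz)
        _ = C' * z * π z := ENNReal.toReal_ofReal (by positivity)
    -- upper bound on D z
    have hDle : D z ≤ M * (C' * z * π z) := by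
      calc D z ≤ ∫ w in Ioo 0 z, M * π w := by
            refine setIntegral_mono_on hfz_int (hπint.const_mul M) measurableSet_Ioo
              fun w _ => mul_le_mul_of_nonneg_right (hgM _) (hπ_nonneg w)
        _ = M * ∫ w in Ioo 0 z, π w := by simpa [smul_eq_mul] using integral_smul M fun w : ℝ => π w
        _ ≤ M * (C' * z * π z) := mul_le_mul_of_nonneg_left hπle hMpos.le
    -- lower bound: D z > 0
    have hDpos : 0 < D z := by
      rw [hDdef]
      rw [setIntegral_pos_iff_support_of_nonneg_ae
        (ae_of_all _ fun w => mul_nonneg ENNReal.toReal_nonneg (hπ_nonneg w)) hfz_int]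
      set ε' : ℝ := min ε (z/2) with hε'def
      have hε'pos : 0 < ε' := lt_min hεpos (by positivity)
      have hsub : Ioo (z - ε') z ⊆ Function.support (fun w => g (z - w) * π w) ∩ Ioo 0 z := by
        intro w hw
        have hw0 : 0 < w := by
          have : ε' ≤ z/2 := min_le_right _ _
          have := hw.1; linarith
        have hzw : z - w < ε := lt_of_lt_of_le (by have := hw.1; linarith) (min_le_left _ _)
        have hgpos : 0 < g (z - w) := by
          refine ENNReal.toReal_pos ?_ (measure_ne_top μ _)
          exact (lt_of_lt_of_le hεμ (measure_mono (Ioi_subset_Ioi hzw.le))).ne'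
        exact ⟨(mul_pos hgpos (hπ_pos w hw0)).ne', hw0, hw.2⟩
      calc (0:ℝ≥0∞) < volume (Ioo (z - ε') z) := by
            rw [Real.volume_Ioo]
            simpa using ENNReal.ofReal_pos.2 (by linarith)
        _ ≤ _ := measure_mono hsub
    -- the division estimate
    rw [le_div_iff₀ hDpos]
    have h1 : (M * C')⁻¹ * z⁻¹ * D z ≤ (M * C')⁻¹ * z⁻¹ * (M * (C' * z * π z)) :=
      mul_le_mul_of_nonneg_left hDle (by positivity)
    have h2 : (M * C')⁻¹ * z⁻¹ * (M * (C' * z * π z)) = π z := by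
      field_simp
    linarith
  -- compare with the non-integrable function z ↦ c / z
  set c : ℝ := (M * C')⁻¹ with hcdef
  have hcpos : 0 < c := by positivity
  have hmono : ∫⁻ z in Ioo 0 x, ENNReal.ofReal (c * z⁻¹) ≤
      ∫⁻ z in Ioo 0 x, ENNReal.ofReal (π z / D z) := by
    refine lintegral_mono_ae ((ae_restrict_iff' measurableSet_Ioo).2
      (ae_of_all _ fun z hz => ?_))
    exact ENNReal.ofReal_le_ofReal (key z ⟨hz.1, hz.2.le.trans hx.2⟩)
  refine top_unique (le_trans (le_of_eq ?_) hmono)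
  -- z ↦ c / z is not integrable on Ioo 0 x
  by_contra hne
  have hne' : ∫⁻ z in Ioo 0 x, ENNReal.ofReal (c * z⁻¹) ≠ ⊤ := fun h => hne h.symm
  have hint : IntegrableOn (fun z => c * z⁻¹) (Ioo 0 x) := by
    rw [IntegrableOn, ← lintegral_ofReal_ne_top_iff_integrable
      (f := fun z : ℝ => c * z⁻¹) ((measurable_const.mul measurable_inv).aestronglyMeasurable.restrict)
      ((ae_restrict_iff' measurableSet_Ioo).2 (ae_of_all _ fun z hz => mul_nonneg hcpos.le (inv_nonneg.2 hz.1.le)))]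
    exact hne'
  have hint' : IntegrableOn (fun z : ℝ => z ^ (-1 : ℝ)) (Ioo 0 x) := by
    have h2 : IntegrableOn (fun z : ℝ => z⁻¹) (Ioo 0 x) := by
      have h3 : IntegrableOn (fun z : ℝ => c⁻¹ * (c * z⁻¹)) (Ioo 0 x) := hint.const_mul c⁻¹
      refine h3.congr_fun (fun z _ => ?_) measurableSet_Ioo
      field_simp
    refine h2.congr_fun (fun z hz => ?_) measurableSet_Ioo
    rw [Real.rpow_neg_one]
  have := (intervalIntegral.integrableOn_Ioo_rpow_iff hx.1).1 hint'
  linarith
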